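/- arXiv:1007.3572 — 2 statements merged into one kernel-verified Lean document; each statement's English description precedes it below -/
import Mathlib

section
/- Let F be a finite field with q elements and let 1 ≤ k ≤ q − 1. Consider the Reed–Solomon code of length q − 1 and dimension k over F, i.e. the set of words (p(α))_{α ∈ F \ {0}} ∈ F^{q−1} as p ranges over polynomials over F of degree less than k. Then the minimum Hamming distance of this code equals q − k: any two distinct codewords differ in at least q − k coordinates, and there exist two distinct codewords differing in exactly q − k coordinates. -/
open Finset Polynomial

/-- The Reed–Solomon code of dimension `k` over `F`: evaluations of
polynomials of degree `< k` at all nonzero elements of `F`. -/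
def ReedSolomonCode (F : Type*) [Field F] (k : ℕ) :
    Set ({x : F // x ≠ 0} → F) :=
  {c | ∃ p : Polynomial F, p ∈ Polynomial.degreeLT F k ∧
        ∀ α : {x : F // x ≠ 0}, c α = Polynomial.eval (α : F) p}

lemma rs_aux_card_roots {F : Type*} [Field F] [Fintype F] [DecidableEq F]
    {p : Polynomial F} (hp : p ≠ 0) :
    (Finset.univ.filter fun α : {x : F // x ≠ 0} => p.eval ↑α = 0).card ≤ p.natDegree := by
  calc (Finset.univ.filter fun α : {x : F // x ≠ 0} => p.eval ↑α = 0).card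
      ≤ p.roots.toFinset.card := by
        refine Finset.card_le_card_of_injOn (fun α => (α : F)) ?_ ?_
        · intro a ha
          simp only [mem_coe, mem_filter, mem_univ, true_and] at ha
          rw [Finset.mem_coe, Multiset.mem_toFinset, Polynomial.mem_roots hp]
          exact ha
        · exact Subtype.coe_injective.injOn
    _ ≤ Multiset.card p.roots := Multiset.toFinset_card_le _
    _ ≤ p.natDegree := Polynomial.card_roots' p

/-- for a finite field `F` with `q` elements and `1 ≤ k ≤ q - 1`,
the Reed–Solomon code of length `q - 1` and dimension `k` has minimum Hamming
distance exactly `q - k`. -/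
theorem reedSolomon_min_hammingDist {F : Type*} [Field F] [Fintype F]
    [DecidableEq F] (q k : ℕ) (hq : Fintype.card F = q)
    (hk1 : 1 ≤ k) (hk2 : k ≤ q - 1) :
    (∀ c₁ ∈ ReedSolomonCode F k, ∀ c₂ ∈ ReedSolomonCode F k,
        c₁ ≠ c₂ → q - k ≤ hammingDist c₁ c₂) ∧
      (∃ c₁ ∈ ReedSolomonCode F k, ∃ c₂ ∈ ReedSolomonCode F k,
        c₁ ≠ c₂ ∧ hammingDist c₁ c₂ = q - k) := by
  have hcardsub : Fintype.card {x : F // x ≠ 0} = q - 1 := by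
    rw [Fintype.card_subtype_compl]; simp [hq]
  have hq2 : 2 ≤ q := by omega
  constructor
  · rintro c₁ ⟨p₁, hp₁, he₁⟩ c₂ ⟨p₂, hp₂, he₂⟩ hne
    set p := p₁ - p₂ with hpdef
    have hp0 : p ≠ 0 := by
      intro h
      apply hne
      funext α
      rw [he₁, he₂, sub_eq_zero.mp h]
    have hdeg : p.degree < (k : WithBot ℕ) :=
      Polynomial.mem_degreeLT.mp (Submodule.sub_mem _ hp₁ hp₂)
    have hnd : p.natDegree ≤ k - 1 := by
      have := (Polynomial.natDegree_lt_iff_degree_lt hp0).mpr hdeg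
      omega
    have hEq : ∀ α : {x : F // x ≠ 0}, (c₁ α = c₂ α) ↔ p.eval ↑α = 0 := by
      intro α
      rw [he₁, he₂, hpdef, Polynomial.eval_sub, sub_eq_zero]
    have hsum : (Finset.univ.filter fun α : {x : F // x ≠ 0} => c₁ α = c₂ α).card
        + (Finset.univ.filter fun α : {x : F // x ≠ 0} => ¬ c₁ α = c₂ α).card = q - 1 := by
      rw [Finset.card_filter_add_card_filter_not, Finset.card_univ, hcardsub]
    have heqcard : (Finset.univ.filter fun α : {x : F // x ≠ 0} => c₁ α = c₂ α).card ≤ k - 1 := by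
      calc (Finset.univ.filter fun α : {x : F // x ≠ 0} => c₁ α = c₂ α).card
          = (Finset.univ.filter fun α : {x : F // x ≠ 0} => p.eval ↑α = 0).card := by
            apply Finset.card_bij (fun a _ => a) <;> simp_all [hEq]
        _ ≤ p.natDegree := rs_aux_card_roots hp0
        _ ≤ k - 1 := hnd
    have hdist : hammingDist c₁ c₂
        = (Finset.univ.filter fun α : {x : F // x ≠ 0} => ¬ c₁ α = c₂ α).card := rfl
    omega
  · -- existence part
    obtain ⟨T, -, hT⟩ := Finset.exists_subset_card_eq (s := (Finset.univ : Finset {x : F // x ≠ 0}))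
      (n := k - 1) (by rw [Finset.card_univ, hcardsub]; omega)
    set S : Finset F := T.image Subtype.val with hSdef
    have hScard : S.card = k - 1 := by
      rw [hSdef, Finset.card_image_of_injective _ Subtype.coe_injective, hT]
    set p : Polynomial F := S.prod (fun a => Polynomial.X - Polynomial.C a) with hpdef
    have hpm : p.Monic := Polynomial.monic_prod_of_monic _ _
      (fun a _ => Polynomial.monic_X_sub_C a)
    have hp0 : p ≠ 0 := hpm.ne_zero
    have hpnd : p.natDegree = k - 1 := by
      rw [hpdef, Polynomial.natDegree_prod _ _ (fun a _ => Polynomial.X_sub_C_ne_zero a)]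
      simp [hScard]
    have hmem : p ∈ Polynomial.degreeLT F k := by
      rw [Polynomial.mem_degreeLT]
      exact (Polynomial.natDegree_lt_iff_degree_lt hp0).mp (by omega)
    have hroot : ∀ α : {x : F // x ≠ 0}, p.eval ↑α = 0 ↔ α ∈ T := by
      intro α
      rw [hpdef, Polynomial.eval_prod, Finset.prod_eq_zero_iff]
      constructor
      · rintro ⟨a, haS, ha⟩
        simp only [Polynomial.eval_sub, Polynomial.eval_X, Polynomial.eval_C,
          sub_eq_zero] at ha
        rw [hSdef, Finset.mem_image] at haS
        obtain ⟨b, hb, rfl⟩ := haS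
        rw [Subtype.coe_injective ha]; exact hb
      · intro hα
        refine ⟨(α : F), ?_, by simp⟩
        rw [hSdef, Finset.mem_image]
        exact ⟨α, hα, rfl⟩
    refine ⟨fun α => p.eval ↑α, ⟨p, hmem, fun _ => rfl⟩,
      (fun _ => 0), ⟨0, ?_, by simp⟩, ?_, ?_⟩
    · rw [Polynomial.mem_degreeLT, Polynomial.degree_zero]
      exact bot_lt_iff_ne_bot.mpr (by simp)
    · -- nonequality: shown after distance; prove via distance positivity
      intro h
      have hdist : hammingDist (fun α : {x : F // x ≠ 0} => p.eval ↑α) (fun _ => 0) = 0 := by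
        rw [h]; simp
      rw [hammingDist_eq_zero] at hdist
      -- then p.eval ↑α = 0 for all α, i.e. all α ∈ T, but card T = k-1 < q-1
      have : ∀ α : {x : F // x ≠ 0}, α ∈ T := by
        intro α
        rw [← hroot α]
        exact congrFun hdist α
      have : T = Finset.univ := Finset.eq_univ_iff_forall.mpr this
      rw [this, Finset.card_univ, hcardsub] at hT
      omega
    · have : hammingDist (fun α : {x : F // x ≠ 0} => p.eval ↑α) (fun _ => 0)
          = (Finset.univ.filter fun α : {x : F // x ≠ 0} => ¬ p.eval ↑α = 0).card := rfl
      rw [this]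
      have hsum : (Finset.univ.filter fun α : {x : F // x ≠ 0} => p.eval ↑α = 0).card
          + (Finset.univ.filter fun α : {x : F // x ≠ 0} => ¬ p.eval ↑α = 0).card = q - 1 := by
        rw [Finset.card_filter_add_card_filter_not, Finset.card_univ, hcardsub]
      have hzc : (Finset.univ.filter fun α : {x : F // x ≠ 0} => p.eval ↑α = 0).card = k - 1 := by
        have : (Finset.univ.filter fun α : {x : F // x ≠ 0} => p.eval ↑α = 0) = T := by
          ext α; simp [hroot α]
        rw [this, hT]
      omega
end

section
/- The number of quasigroup operations on a set of n elements (equivalently, the number of Latin squares of order n) is at least n!·(n−1)!·…·2!·1! = ∏_{k=1}^{n} k!. -/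
open Finset Function

set_option linter.unusedSectionVars false
set_option linter.unusedVariables false
set_option maxHeartbeats 1000000

variable {ι β : Type*} [Fintype ι] [DecidableEq ι] [Fintype β] [DecidableEq β] [Inhabited β]

/-- partial systems of distinct representatives on an index set `I`. -/
def sdrs (I : Finset ι) (A : ι → Finset β) : Set (ι → β) :=
  {f | Set.InjOn f I ∧ (∀ i ∈ I, f i ∈ A i) ∧ ∀ i ∉ I, f i = default}

lemma sdrs_nonempty (I : Finset ι) (A : ι → Finset β)
    (hall : ∀ S ⊆ I, S.card ≤ (S.biUnion A).card) : (sdrs I A).Nonempty := by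
  have key : ∀ s : Finset {x // x ∈ I}, s.card ≤ (s.biUnion fun i => A i.1).card := by
    intro s
    have h1 : (s.image Subtype.val).card = s.card := card_image_of_injective _ Subtype.val_injective
    have h2 : (s.image Subtype.val).biUnion A = s.biUnion fun i => A i.1 := by
      ext y; simp
    have h3 : s.image Subtype.val ⊆ I := by
      intro x hx; simp only [mem_image] at hx; obtain ⟨⟨x, hxI⟩, _, rfl⟩ := hx; exact hxI
    calc s.card = (s.image Subtype.val).card := h1.symm
      _ ≤ ((s.image Subtype.val).biUnion A).card := hall _ h3
      _ = _ := by rw [h2]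
  obtain ⟨f, hfinj, hf⟩ := (Finset.all_card_le_biUnion_card_iff_exists_injective
    (fun i : {x // x ∈ I} => A i.1)).mp key
  refine ⟨fun i => if h : i ∈ I then f ⟨i, h⟩ else default, ?_, ?_, ?_⟩
  · intro i hi j hj hij
    simp only [mem_coe] at hi hj
    simp only [dif_pos hi, dif_pos hj] at hij
    exact congrArg Subtype.val (hfinj hij)
  · intro i hi; simp only [dif_pos hi]; exact hf _
  · intro i hi; simp only [dif_neg hi]

/-- **Marshall Hall's theorem**: counting systems of distinct representatives. -/
theorem mhall : ∀ (N : ℕ) (I : Finset ι), I.card = N → ∀ (m : ℕ) (A : ι → Finset β),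
    (∀ S ⊆ I, S.card ≤ (S.biUnion A).card) → m ≤ I.card → (∀ i ∈ I, m ≤ (A i).card) →
    m.factorial ≤ Nat.card (sdrs I A) := by
  intro N
  induction N using Nat.strong_induction_on with
  | _ N IH =>
  intro I hIN m A hall hmI hsize
  match m with
  | 0 =>
    simp only [Nat.factorial_zero]
    have : Nonempty (sdrs I A) := (sdrs_nonempty I A hall).to_subtype
    exact Nat.one_le_iff_ne_zero.mpr (Nat.card_ne_zero.mpr ⟨this, Set.toFinite _⟩)
  | m + 1 =>
  classical
  by_cases hcrit : ∃ J ⊆ I, J.Nonempty ∧ J ≠ I ∧ (J.biUnion A).card = J.card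
  · -- critical block case
    obtain ⟨J, hJI, hJne, hJneI, hJcard⟩ := hcrit
    set U := J.biUnion A with hU
    set B : ι → Finset β := fun i => A i \ U with hB
    -- the inductive hypothesis applied to `J`
    have hJlt : J.card < I.card := card_lt_card (hJI.ssubset_of_ne hJneI)
    have hmJ : m + 1 ≤ J.card := by
      obtain ⟨j, hj⟩ := hJne
      calc m + 1 ≤ (A j).card := hsize j (hJI hj)
        _ ≤ U.card := card_le_card (subset_biUnion_of_mem A hj)
        _ = J.card := hJcard
    have IHJ : (m+1).factorial ≤ Nat.card (sdrs J A) :=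
      IH J.card (hIN ▸ hJlt) J rfl (m+1) A (fun S hS => hall S (hS.trans hJI)) hmJ
        (fun i hi => hsize i (hJI hi))
    have hallB : ∀ S ⊆ I \ J, S.card ≤ (S.biUnion B).card := by
      intro S hS
      have hdisj : Disjoint S J := disjoint_of_subset_left hS sdiff_disjoint
      have hsub : (S ∪ J).biUnion A ⊆ (S.biUnion B) ∪ U := by
        intro y hy
        rw [mem_biUnion] at hy
        obtain ⟨i, hi, hyA⟩ := hy
        by_cases hyU : y ∈ U
        · exact mem_union_right _ hyU
        · rcases mem_union.mp hi with hiS | hiJ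
          · exact mem_union_left _ (mem_biUnion.mpr ⟨i, hiS, mem_sdiff.mpr ⟨hyA, hyU⟩⟩)
          · exact absurd (mem_biUnion.mpr ⟨i, hiJ, hyA⟩) hyU
      have h1 : S.card + J.card = (S ∪ J).card := (card_union_of_disjoint hdisj).symm
      have h2 : (S ∪ J).card ≤ ((S ∪ J).biUnion A).card :=
        hall _ (union_subset (hS.trans sdiff_subset) hJI)
      have h3 : ((S ∪ J).biUnion A).card ≤ (S.biUnion B).card + U.card :=
        (card_le_card hsub).trans (card_union_le _ _)
      have h4 : U.card = J.card := hJcard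
      omega
    have hBne : Nonempty (sdrs (I \ J) B) := (sdrs_nonempty (I \ J) B hallB).to_subtype
    -- the combining injection
    set Ψ : ↥(sdrs J A) × ↥(sdrs (I \ J) B) → (ι → β) :=
      fun p => fun i => if i ∈ J then p.1.1 i else p.2.1 i with hΨ
    have Ψmem : ∀ p, Ψ p ∈ sdrs I A := by
      rintro ⟨⟨g, hginj, hgmem, hgout⟩, ⟨h, hhinj, hhmem, hhout⟩⟩
      refine ⟨?_, ?_, ?_⟩
      · intro i hi j hj heq
        simp only [hΨ, mem_coe] at heq hi hj
        by_cases hiJ : i ∈ J <;> by_cases hjJ : j ∈ J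
        · rw [if_pos hiJ, if_pos hjJ] at heq
          exact hginj (by exact_mod_cast hiJ) (by exact_mod_cast hjJ) heq
        · rw [if_pos hiJ, if_neg hjJ] at heq
          have h1 : g i ∈ U := mem_biUnion.mpr ⟨i, hiJ, hgmem i hiJ⟩
          have h2 : h j ∉ U := (mem_sdiff.mp (hhmem j (mem_sdiff.mpr ⟨hj, hjJ⟩))).2
          exact absurd (heq ▸ h1) h2
        · rw [if_neg hiJ, if_pos hjJ] at heq
          have h1 : g j ∈ U := mem_biUnion.mpr ⟨j, hjJ, hgmem j hjJ⟩
          have h2 : h i ∉ U := (mem_sdiff.mp (hhmem i (mem_sdiff.mpr ⟨hi, hiJ⟩))).2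
          exact absurd (heq ▸ h2) (by simp [h1])
        · rw [if_neg hiJ, if_neg hjJ] at heq
          exact hhinj (by simp [hi, hiJ]) (by simp [hj, hjJ]) heq
      · intro i hi
        simp only [hΨ]
        by_cases hiJ : i ∈ J
        · rw [if_pos hiJ]; exact hgmem i hiJ
        · rw [if_neg hiJ]
          exact (mem_sdiff.mp (hhmem i (mem_sdiff.mpr ⟨hi, hiJ⟩))).1
      · intro i hi
        have hiJ : i ∉ J := fun h => hi (hJI h)
        simp only [hΨ, if_neg hiJ]
        exact hhout i (by simp [hi])
    have Ψinj : Function.Injective Ψ := by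
      rintro ⟨⟨g, hg⟩, ⟨h, hh⟩⟩ ⟨⟨g', hg'⟩, ⟨h', hh'⟩⟩ heq
      have heq' : ∀ i, (if i ∈ J then g i else h i) = (if i ∈ J then g' i else h' i) :=
        fun i => congrFun heq i
      have e1 : g = g' := by
        funext i
        by_cases hiJ : i ∈ J
        · have := heq' i; rwa [if_pos hiJ, if_pos hiJ] at this
        · rw [hg.2.2 i hiJ, hg'.2.2 i hiJ]
      have e2 : h = h' := by
        funext i
        by_cases hiIJ : i ∈ I \ J
        · have hiJ : i ∉ J := (mem_sdiff.mp hiIJ).2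
          have := heq' i; rwa [if_neg hiJ, if_neg hiJ] at this
        · rw [hh.2.2 i hiIJ, hh'.2.2 i hiIJ]
      simp [Prod.ext_iff, Subtype.ext_iff, e1, e2]
    have key : Nat.card (↥(sdrs J A) × ↥(sdrs (I \ J) B)) ≤ Nat.card (sdrs I A) :=
      Nat.card_le_card_of_injective (fun p => (⟨Ψ p, Ψmem p⟩ : ↥(sdrs I A)))
        (fun p q hpq => Ψinj (by simpa [Subtype.ext_iff] using hpq))
    rw [Nat.card_prod] at key
    have hpos : 1 ≤ Nat.card (sdrs (I \ J) B) :=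
      Nat.one_le_iff_ne_zero.mpr (Nat.card_ne_zero.mpr ⟨hBne, Set.toFinite _⟩)
    calc (m+1).factorial = (m+1).factorial * 1 := (mul_one _).symm
      _ ≤ Nat.card (sdrs J A) * Nat.card (sdrs (I \ J) B) := Nat.mul_le_mul IHJ hpos
      _ ≤ _ := key
  · -- no critical block
    push_neg at hcrit
    have hncrit : ∀ J ⊆ I, J.Nonempty → J ≠ I → J.card + 1 ≤ (J.biUnion A).card := by
      intro J hJI hJne hJneI
      rcases (hall J hJI).lt_or_eq with h | h
      · exact h
      · exact absurd h.symm (hcrit J hJI hJne hJneI)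
    have hIne : I.Nonempty := card_pos.mp (by omega)
    obtain ⟨i0, hi0⟩ := hIne
    have hNpos : 0 < N := by omega
    -- the inductive hypothesis applied to the erased families
    have IHe : ∀ x ∈ A i0,
        m.factorial ≤ Nat.card (sdrs (I.erase i0) (fun i => (A i).erase x)) := by
      intro x hx
      have hcerase : (I.erase i0).card = I.card - 1 := card_erase_of_mem hi0
      refine IH (I.erase i0).card (by omega) _ rfl m _ ?_ (by omega) ?_
      · intro S hS
        rcases S.eq_empty_or_nonempty with rfl | hSne
        · simp
        · have hSI : S ⊆ I := hS.trans (erase_subset _ _)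
          have hSneI : S ≠ I := by
            intro h; subst h; exact notMem_erase i0 S (hS hi0)
          have h1 : S.card + 1 ≤ (S.biUnion A).card := hncrit S hSI hSne hSneI
          have h2 : (S.biUnion A).erase x ⊆ S.biUnion (fun i => (A i).erase x) := by
            intro y hy
            obtain ⟨hyx, hy⟩ := mem_erase.mp hy
            obtain ⟨i, hi, hyA⟩ := mem_biUnion.mp hy
            exact mem_biUnion.mpr ⟨i, hi, mem_erase.mpr ⟨hyx, hyA⟩⟩
          have h3 : (S.biUnion A).card - 1 ≤ ((S.biUnion A).erase x).card :=
            pred_card_le_card_erase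
          have h4 := card_le_card h2
          omega
      · intro i hi
        have h1 : m + 1 ≤ (A i).card := hsize i (mem_of_mem_erase hi)
        have h2 : (A i).card - 1 ≤ ((A i).erase x).card := pred_card_le_card_erase
        omega
    set S : {x // x ∈ A i0} → Set (ι → β) :=
      fun x => sdrs (I.erase i0) (fun i => (A i).erase ↑x) with hS
    set Φ : (Σ x : {x // x ∈ A i0}, ↥(S x)) → (ι → β) :=
      fun p => Function.update p.2.1 i0 ↑p.1 with hΦ
    have Φmem : ∀ p, Φ p ∈ sdrs I A := by
      rintro ⟨⟨x, hx⟩, ⟨g, hginj, hgmem, hgout⟩⟩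
      refine ⟨?_, ?_, ?_⟩
      · intro i hi j hj heq
        simp only [hΦ, mem_coe] at heq hi hj
        by_cases hii : i = i0 <;> by_cases hjj : j = i0
        · rw [hii, hjj]
        · subst hii
          rw [Function.update_self, Function.update_of_ne hjj] at heq
          have : g j ∈ (A j).erase x := hgmem j (mem_erase.mpr ⟨hjj, hj⟩)
          exact absurd (heq ▸ (mem_erase.mp this).1) (fun h => h rfl)
        · subst hjj
          rw [Function.update_self, Function.update_of_ne hii] at heq
          have : g i ∈ (A i).erase x := hgmem i (mem_erase.mpr ⟨hii, hi⟩)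
          exact absurd ((mem_erase.mp this).1) (by simp [heq])
        · rw [Function.update_of_ne hii, Function.update_of_ne hjj] at heq
          exact hginj (mem_coe.mpr (mem_erase.mpr ⟨hii, hi⟩))
            (mem_coe.mpr (mem_erase.mpr ⟨hjj, hj⟩)) heq
      · intro i hi
        by_cases hii : i = i0
        · subst hii; simp only [hΦ, Function.update_self]; exact hx
        · simp only [hΦ, Function.update_of_ne hii]
          exact mem_of_mem_erase (hgmem i (mem_erase.mpr ⟨hii, hi⟩))
      · intro i hi
        have hii : i ≠ i0 := fun h => hi (h ▸ hi0)
        simp only [hΦ, Function.update_of_ne hii]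
        exact hgout i (fun h => hi (mem_of_mem_erase h))
    have Φinj : Function.Injective Φ := by
      rintro ⟨⟨x, hx⟩, ⟨g, hg⟩⟩ ⟨⟨x', hx'⟩, ⟨g', hg'⟩⟩ heq
      simp only [hΦ] at heq
      have hxx : x = x' := by
        have := congrFun heq i0
        simpa using this
      subst hxx
      have hgg : g = g' := by
        funext i
        by_cases hii : i = i0
        · rw [hii, hg.2.2 i0 (notMem_erase _ _), hg'.2.2 i0 (notMem_erase _ _)]
        · have := congrFun heq i
          rwa [Function.update_of_ne hii, Function.update_of_ne hii] at this
      subst hgg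
      rfl
    have key : Nat.card (Σ x : {x // x ∈ A i0}, ↥(S x)) ≤ Nat.card (sdrs I A) :=
      Nat.card_le_card_of_injective (fun p => (⟨Φ p, Φmem p⟩ : ↥(sdrs I A)))
        (fun p q hpq => Φinj (by simpa [Subtype.ext_iff] using hpq))
    letI : ∀ x : {x // x ∈ A i0}, Fintype ↥(S x) := fun x => Set.Finite.fintype (Set.toFinite _)
    rw [Nat.card_eq_fintype_card, Fintype.card_sigma] at key
    have hterm : ∀ x : {x // x ∈ A i0}, m.factorial ≤ Fintype.card ↥(S x) := by
      intro ⟨x, hx⟩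
      have := IHe x hx
      rw [Nat.card_eq_fintype_card] at this
      simpa [hS] using this
    have hsum : (A i0).card * m.factorial ≤ ∑ x : {x // x ∈ A i0}, Fintype.card ↥(S x) := by
      calc (A i0).card * m.factorial = ∑ _x : {x // x ∈ A i0}, m.factorial := by
            rw [Finset.sum_const, card_univ, Fintype.card_coe, smul_eq_mul]
        _ ≤ _ := Finset.sum_le_sum (fun x _ => hterm x)
    calc (m+1).factorial = (m+1) * m.factorial := rfl
      _ ≤ (A i0).card * m.factorial := Nat.mul_le_mul_right _ (hsize i0 hi0)
      _ ≤ _ := hsum.trans key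

def latinRect (n k : ℕ) : Type :=
  {g : Fin k → Fin n → Fin n // (∀ r, Function.Bijective (g r)) ∧
    ∀ x, Function.Injective fun r => g r x}

instance (n k : ℕ) : Finite (latinRect n k) := by unfold latinRect; infer_instance

theorem latinRect_step {n k : ℕ} (hk : k < n) :
    (n - k).factorial * Nat.card (latinRect n k) ≤ Nat.card (latinRect n (k + 1)) := by
  classical
  haveI : Inhabited (Fin n) := ⟨⟨0, Nat.lt_of_le_of_lt (Nat.zero_le _) hk⟩⟩
  -- the sets of available symbols for each column of a rectangle
  set A : latinRect n k → Fin n → Finset (Fin n) :=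
    fun g x => univ.filter (fun y => ¬ ∃ r, g.1 r x = y) with hA
  have memA : ∀ (g : latinRect n k) (x y : Fin n), y ∈ A g x ↔ ¬ ∃ r, g.1 r x = y := by
    intro g x y; simp [hA]
  -- each column of a rectangle contains k distinct symbols
  have colcount : ∀ (g : latinRect n k) (x : Fin n),
      (univ.filter fun y => ∃ r, g.1 r x = y).card = k := by
    intro ⟨g, hrow, hcol⟩ x
    have himg : univ.image (fun r => g r x) = univ.filter fun y => ∃ r, g r x = y := by
      ext y; simp
    rw [← himg, card_image_of_injective _ (hcol x), card_univ, Fintype.card_fin]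
  -- each symbol is missing from exactly n - k columns
  have rowcount : ∀ (g : latinRect n k) (y : Fin n),
      (univ.filter fun x => ∃ r, g.1 r x = y).card = k := by
    intro ⟨g, hrow, hcol⟩ y
    set c : Fin k → Fin n := fun r => (Equiv.ofBijective (g r) (hrow r)).symm y with hc
    have hcy : ∀ r, g r (c r) = y := by
      intro r
      have := (Equiv.ofBijective (g r) (hrow r)).apply_symm_apply y
      simpa [hc, Equiv.ofBijective] using this
    have hcinj : Function.Injective c := by
      intro r r' hrr
      refine hcol (c r) ?_
      show g r (c r) = g r' (c r)
      rw [hcy r, hrr, hcy r']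
    have himg : univ.image c = univ.filter fun x => ∃ r, g r x = y := by
      ext x
      simp only [mem_image, mem_univ, true_and, mem_filter]
      constructor
      · rintro ⟨r, rfl⟩; exact ⟨r, hcy r⟩
      · rintro ⟨r, hr⟩
        exact ⟨r, (hrow r).1 (by rw [hcy r, hr])⟩
    rw [← himg, card_image_of_injective _ hcinj, card_univ, Fintype.card_fin]
  have cardA : ∀ (g : latinRect n k) (x : Fin n), (A g x).card = n - k := by
    intro g x
    have h1 := Finset.card_filter_add_card_filter_not
      (s := (univ : Finset (Fin n))) (p := fun y => ∃ r, g.1 r x = y)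
    have h2 := colcount g x
    have h3 : (univ.filter fun y => ¬ ∃ r, g.1 r x = y).card = n - k := by
      rw [card_univ, Fintype.card_fin] at h1; omega
    simpa [hA] using h3
  have cardAy : ∀ (g : latinRect n k) (y : Fin n),
      (univ.filter fun x => y ∈ A g x).card = n - k := by
    intro g y
    have h1 := Finset.card_filter_add_card_filter_not
      (s := (univ : Finset (Fin n))) (p := fun x => ∃ r, g.1 r x = y)
    have h2 := rowcount g y
    rw [card_univ, Fintype.card_fin] at h1
    have h3 : (univ.filter fun x => y ∈ A g x) = univ.filter fun x => ¬ ∃ r, g.1 r x = y := by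
      ext x; simp [memA]
    rw [h3]; omega
  -- Hall's condition
  have hall : ∀ (g : latinRect n k) (S : Finset (Fin n)),
      S.card ≤ (S.biUnion (A g)).card := by
    intro g S
    set t := S.biUnion (A g) with ht
    have key : S.card * (n - k) ≤ t.card * (n - k) := by
      refine Finset.card_mul_le_card_mul (fun x y => y ∈ A g x) ?_ ?_
      · intro x hx
        have : t.bipartiteAbove (fun x y => y ∈ A g x) x = A g x := by
          unfold Finset.bipartiteAbove
          ext y
          simp only [mem_filter, ht, mem_biUnion]
          exact ⟨fun h => h.2, fun h => ⟨⟨x, hx, h⟩, h⟩⟩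
        rw [this, cardA]
      · intro y hy
        have hsub : S.bipartiteBelow (fun x y => y ∈ A g x) y ⊆
            univ.filter fun x => y ∈ A g x := by
          intro x hx
          simp only [Finset.bipartiteBelow, mem_filter] at hx ⊢
          exact ⟨mem_univ x, hx.2⟩
        calc (S.bipartiteBelow (fun x y => y ∈ A g x) y).card
            ≤ (univ.filter fun x => y ∈ A g x).card := card_le_card hsub
          _ = n - k := cardAy g y
    exact Nat.le_of_mul_le_mul_right key (by omega)
  -- count extensions via Marshall Hall
  have ext_count : ∀ g : latinRect n k,
      (n - k).factorial ≤ Nat.card (sdrs univ (A g)) := by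
    intro g
    refine mhall (Fintype.card (Fin n)) univ card_univ (n - k) (A g)
      (fun S _ => hall g S) ?_ (fun x _ => (cardA g x).ge)
    rw [card_univ, Fintype.card_fin]; omega
  -- the appending injection
  set Θ : (Σ g : latinRect n k, ↥(sdrs univ (A g))) → (Fin (k+1) → Fin n → Fin n) :=
    fun p => Fin.snoc p.1.1 p.2.1 with hΘ
  have Θmem : ∀ p, (∀ r, Function.Bijective (Θ p r)) ∧
      ∀ x, Function.Injective fun r => Θ p r x := by
    rintro ⟨⟨g, hrow, hcol⟩, ⟨f, hfinj, hfmem, -⟩⟩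
    have hfbij : Function.Bijective f := by
      refine Finite.injective_iff_bijective.mp ?_
      rw [coe_univ] at hfinj; rw [Set.injOn_univ] at hfinj
      exact hfinj
    constructor
    · intro r
      refine Fin.lastCases ?_ ?_ r
      · simpa [hΘ] using hfbij
      · intro i; simpa [hΘ] using hrow i
    · intro x r r' heq
      simp only [hΘ] at heq
      have hfx : ¬ ∃ i, g i x = f x := by
        have := hfmem x (mem_univ x)
        exact (memA _ _ _).mp this
      rcases Fin.eq_castSucc_or_eq_last r with ⟨i, rfl⟩ | rfl <;>
        rcases Fin.eq_castSucc_or_eq_last r' with ⟨j, rfl⟩ | rfl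
      · have : g i x = g j x := by
          rwa [Fin.snoc_castSucc, Fin.snoc_castSucc] at heq
        exact congrArg Fin.castSucc (hcol x this)
      · rw [Fin.snoc_castSucc, Fin.snoc_last] at heq
        exact absurd ⟨i, heq⟩ hfx
      · rw [Fin.snoc_last, Fin.snoc_castSucc] at heq
        exact absurd ⟨j, heq.symm⟩ hfx
      · rfl
  have Θinj : Function.Injective Θ := by
    rintro ⟨⟨g, hg⟩, ⟨f, hf⟩⟩ ⟨⟨g', hg'⟩, ⟨f', hf'⟩⟩ heq
    simp only [hΘ] at heq
    have e1 : g = g' := by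
      funext r
      have := congrFun heq (Fin.castSucc r)
      rwa [Fin.snoc_castSucc, Fin.snoc_castSucc] at this
    subst e1
    have e2 : f = f' := by
      have := congrFun heq (Fin.last k)
      rwa [Fin.snoc_last, Fin.snoc_last] at this
    subst e2
    rfl
  have key : Nat.card (Σ g : latinRect n k, ↥(sdrs univ (A g))) ≤
      Nat.card (latinRect n (k+1)) :=
    Nat.card_le_card_of_injective
      (fun p => (⟨Θ p, Θmem p⟩ : latinRect n (k+1)))
      (fun p q hpq => Θinj (by simpa [latinRect, Subtype.ext_iff] using hpq))
  letI : Fintype (latinRect n k) := Fintype.ofFinite _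
  letI : ∀ g : latinRect n k, Fintype ↥(sdrs univ (A g)) :=
    fun g => Set.Finite.fintype (Set.toFinite _)
  rw [Nat.card_eq_fintype_card, Fintype.card_sigma] at key
  have hsum : Nat.card (latinRect n k) * (n - k).factorial ≤
      ∑ g : latinRect n k, Fintype.card ↥(sdrs univ (A g)) := by
    rw [Nat.card_eq_fintype_card]
    calc Fintype.card (latinRect n k) * (n - k).factorial
        = ∑ _g : latinRect n k, (n - k).factorial := by rw [Finset.sum_const, card_univ, smul_eq_mul]
      _ ≤ _ := Finset.sum_le_sum (fun g _ => by
          rw [← Nat.card_eq_fintype_card]; exact ext_count g)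
  calc (n - k).factorial * Nat.card (latinRect n k)
      = Nat.card (latinRect n k) * (n - k).factorial := Nat.mul_comm _ _
    _ ≤ _ := hsum.trans key

theorem latinRect_bound (n : ℕ) :
    ∀ k ≤ n, ∏ j ∈ Icc (n - k + 1) n, j.factorial ≤ Nat.card (latinRect n k) := by
  intro k
  induction k with
  | zero =>
    intro _
    have h1 : Icc (n - 0 + 1) n = ∅ := by rw [Nat.sub_zero]; exact Icc_eq_empty (by omega)
    rw [h1, prod_empty]
    have hne : Nonempty (latinRect n 0) :=
      ⟨⟨fun r => r.elim0, fun r => r.elim0, fun x r => r.elim0⟩⟩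
    exact Nat.one_le_iff_ne_zero.mpr (Nat.card_ne_zero.mpr ⟨hne, inferInstance⟩)
  | succ k IHk =>
    intro hk
    have hk' : k < n := hk
    have h1 : n - (k + 1) + 1 = n - k := by omega
    have h2 : (n - k) ≤ n := by omega
    calc ∏ j ∈ Icc (n - (k+1) + 1) n, j.factorial
        = ∏ j ∈ Icc (n - k) n, j.factorial := by rw [h1]
      _ = (n - k).factorial * ∏ j ∈ Ioc (n - k) n, j.factorial := by
          rw [Icc_eq_cons_Ioc h2, prod_cons]
      _ = (n - k).factorial * ∏ j ∈ Icc (n - k + 1) n, j.factorial := by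
          rw [Finset.Icc_add_one_left_eq_Ioc]
      _ ≤ (n - k).factorial * Nat.card (latinRect n k) :=
          Nat.mul_le_mul_left _ (IHk (by omega))
      _ ≤ _ := latinRect_step hk'

/-- the number of quasigroup operations on an `n`-element set
(equivalently, the number of Latin squares of order `n`) is at least
`n!·(n−1)!·…·2!·1! = ∏_{k=1}^{n} k!`. -/
theorem card_quasigroup_ops_ge_prod_factorials (n : ℕ) :
    ∏ k ∈ Finset.Icc 1 n, Nat.factorial k ≤
      Nat.card {f : Fin n → Fin n → Fin n //
        (∀ a, Function.Bijective (f a)) ∧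
        (∀ a, Function.Bijective fun x => f x a)} := by
  have h := latinRect_bound n n le_rfl
  rw [Nat.sub_self, Nat.zero_add] at h
  have e : latinRect n n ≃ {f : Fin n → Fin n → Fin n //
      (∀ a, Function.Bijective (f a)) ∧ (∀ a, Function.Bijective fun x => f x a)} :=
    Equiv.subtypeEquivRight (fun f => and_congr Iff.rfl
      (forall_congr' fun a => Finite.injective_iff_bijective))
  calc ∏ k ∈ Finset.Icc 1 n, Nat.factorial k ≤ Nat.card (latinRect n n) := h
    _ = _ := Nat.card_congr e
end
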